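/- Let p ≡ 1 (mod 8) be prime and write p = a² + b² with a odd, b even, a + b ≡ 1 (mod 4). If 32 divides (a-1)² + b², then the group E(𝔽_p) of points of y² = x³ - x over 𝔽_p contains an element of order 8. -/

import Mathlib

open WeierstrassCurve

/-- The elliptic curve `y² = x³ - x` over `ℤ/pℤ`, as a Weierstrass curve in affine coordinates. -/
noncomputable def Ecurve (p : ℕ) : WeierstrassCurve.Affine (ZMod p) :=
  { a₁ := 0, a₂ := 0, a₃ := 0, a₄ := -1, a₆ := 0 }

/-- A doubling lemma for `y² = x³ - x`-shaped curves. -/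
lemma Ecurve.dbl {F : Type*} [Field F] [DecidableEq F] {W : WeierstrassCurve.Affine F}
    (hW1 : W.a₁ = 0) (hW2 : W.a₂ = 0) (hW3 : W.a₃ = 0) (hW4 : W.a₄ = -1) (hW6 : W.a₆ = 0)
    {x₁ y₁ ξ : F} (h : W.Nonsingular x₁ y₁) (hy : y₁ ≠ 0) (h2 : (2 : F) ≠ 0)
    (hkey : (3 * x₁ ^ 2 - 1) ^ 2 = (ξ + 2 * x₁) * (2 * y₁) ^ 2) :
    ∃ (x₂ y₂ : F) (h₂ : W.Nonsingular x₂ y₂),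
      Affine.Point.some _ _ h + Affine.Point.some _ _ h = Affine.Point.some _ _ h₂ ∧ x₂ = ξ ∧
        y₂ ^ 2 = x₂ ^ 3 - x₂ := by
  have hy' : y₁ ≠ W.negY x₁ y₁ := by
    rw [Affine.negY, hW1, hW3]
    intro hc
    apply hy
    have h2y : (2 : F) * y₁ = 0 := by linear_combination hc
    rcases mul_eq_zero.mp h2y with hc2 | hc2
    · exact absurd hc2 h2
    · exact hc2
  have h2y : (2 : F) * y₁ ≠ 0 := mul_ne_zero h2 hy
  have hl : W.slope x₁ x₁ y₁ y₁ = (3 * x₁ ^ 2 - 1) / (2 * y₁) := by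
    rw [Affine.slope_of_Y_ne rfl hy', Affine.negY, hW1, hW2, hW3, hW4]
    congr 1 <;> ring
  have haddX : W.addX x₁ x₁ (W.slope x₁ x₁ y₁ y₁) = ξ := by
    rw [Affine.addX, hl, div_pow, hkey, hW1, hW2,
      mul_div_cancel_right₀ _ (pow_ne_zero 2 h2y)]
    ring
  have hns := Affine.nonsingular_add h h fun hxy => hy' hxy.right
  refine ⟨_, _, hns, Affine.Point.add_self_of_Y_ne hy', haddX, ?_⟩
  have heq := (W.equation_iff _ _).mp hns.1
  rw [hW1, hW2, hW3, hW4, hW6] at heq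
  linear_combination heq

/-- Jacobi-symbol helper: if `c` is odd, coprime to `d`, `c ∣ p - e*d²` and
`J(e | |c|) = 1`, then `c` is a nonzero square mod `p`. -/
lemma Ecurve.jacHelper (p : ℕ) [hpp : Fact p.Prime] (hp4 : p % 4 = 1) (c d e : ℤ)
    (hodd : Odd c) (hgcd : Int.gcd d c = 1) (hdvd : c ∣ (p : ℤ) - e * d ^ 2)
    (he : jacobiSym e c.natAbs = 1) :
    IsSquare ((c : ZMod p)) ∧ (c : ZMod p) ≠ 0 := by
  set n := c.natAbs with hn
  have hnodd : Odd n := Int.natAbs_odd.mpr hodd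
  have hpodd : Odd p := by have := hpp.out.two_le; exact Nat.odd_iff.mpr (by omega)
  have hjp : jacobiSym (n : ℤ) p = jacobiSym (p : ℤ) n :=
    jacobiSym.quadratic_reciprocity_one_mod_four' hnodd hp4
  have hndvd : (n : ℤ) ∣ (p : ℤ) - e * d ^ 2 := Int.natAbs_dvd.mpr hdvd
  have hmod : ((p : ℤ)) % (n : ℤ) = (e * d ^ 2) % (n : ℤ) := by
    have : (p : ℤ) ≡ e * d ^ 2 [ZMOD (n : ℤ)] := by
      rw [Int.modEq_iff_dvd]
      have := dvd_neg.mpr hndvd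
      simpa [neg_sub] using this
    exact this
  have h4 : jacobiSym (d ^ 2) n = 1 := by
    apply jacobiSym.sq_one'
    simpa [Int.gcd, Int.natAbs_natCast] using hgcd
  have hchain : jacobiSym (p : ℤ) n = 1 := by
    rw [jacobiSym.mod_left' hmod, jacobiSym.mul_left, h4, he, one_mul]
  have hj : jacobiSym c p = 1 := by
    rcases le_or_gt 0 c with hc | hc
    · have hcn : c = (n : ℤ) := by rw [hn]; omega
      rw [hcn, hjp, hchain]
    · have hcn : c = -(n : ℤ) := by rw [hn]; omega
      rw [hcn, jacobiSym.neg _ hpodd, ZMod.χ₄_nat_one_mod_four hp4, hjp, hchain, one_mul]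
  refine ⟨ZMod.isSquare_of_jacobiSym_eq_one hj, ?_⟩
  intro h0
  have hdvd' : (p : ℤ) ∣ c := (ZMod.intCast_zmod_eq_zero_iff_dvd c p).mp h0
  have hcm : c % (p : ℤ) = 0 := Int.emod_eq_zero_of_dvd hdvd'
  rw [jacobiSym.mod_left, hcm, jacobiSym.zero_left hpp.out.one_lt] at hj
  norm_num at hj

theorem stmt16 (p : ℕ) [Fact p.Prime] (h8 : p % 8 = 1)
    (a b : ℤ) (hab : (p : ℤ) = a ^ 2 + b ^ 2)
    (ha : Odd a) (hb : Even b) (habm : (a + b) % 4 = 1)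
    (hdvd : (32 : ℤ) ∣ (a - 1) ^ 2 + b ^ 2) :
    ∃ P : (Ecurve p).Point, addOrderOf P = 8 := by
  have hp := (inferInstance : Fact p.Prime).out
  have hp2 : p ≠ 2 := by intro h; rw [h] at h8; norm_num at h8
  have hple : 2 ≤ p := hp.two_le
  have hp4 : p % 4 = 1 := by omega
  -- 2 ≠ 0 in ZMod p
  have h2ne : (2 : ZMod p) ≠ 0 := by
    intro h0
    have : (p : ℕ) ∣ 2 := by
      exact (ZMod.natCast_eq_zero_iff 2 p).mp (by exact_mod_cast h0)
    have := Nat.le_of_dvd (by norm_num) this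
    omega
  -- coprimality of a and b
  have hgcd : Int.gcd a b = 1 := by
    by_contra hg
    set g₀ := Int.gcd a b with hg₀
    have hga : (g₀ : ℤ) ∣ a := Int.gcd_dvd_left a b
    have hgb : (g₀ : ℤ) ∣ b := Int.gcd_dvd_right a b
    have hsq : ((g₀ * g₀ : ℕ) : ℤ) ∣ (p : ℤ) := by
      rw [hab]
      push_cast
      exact dvd_add (by rw [pow_two]; exact mul_dvd_mul hga hga)
        (by rw [pow_two]; exact mul_dvd_mul hgb hgb)
    have hsq' : g₀ * g₀ ∣ p := by exact_mod_cast hsq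
    rcases (Nat.Prime.eq_one_or_self_of_dvd hp _ hsq') with h1 | h1
    · exact hg (Nat.eq_one_of_mul_eq_one_left h1)
    · have hgdvd : g₀ ∣ p := ⟨g₀, h1.symm⟩
      rcases (Nat.Prime.eq_one_or_self_of_dvd hp _ hgdvd) with h2 | h2
      · exact hg (by omega)
      · rw [h2] at h1; nlinarith [hp.two_le]
  -- basic mod p facts
  have hsum : ((a : ZMod p)) ^ 2 + ((b : ZMod p)) ^ 2 = 0 := by
    have hz : ((p : ℤ) : ZMod p) = 0 := by exact_mod_cast ZMod.natCast_self p
    rw [hab] at hz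
    push_cast at hz
    linear_combination hz
  have haZ : ((a : ZMod p)) ≠ 0 := by
    intro h0
    have hpa : (p : ℤ) ∣ a := (ZMod.intCast_zmod_eq_zero_iff_dvd a p).mp h0
    have hbZ : ((b : ZMod p)) ^ 2 = 0 := by rw [← hsum, h0]; ring
    have hb0 : ((b : ZMod p)) = 0 := by
      exact pow_eq_zero_iff (n := 2) (by norm_num) |>.mp hbZ
    have hpb : (p : ℤ) ∣ b := (ZMod.intCast_zmod_eq_zero_iff_dvd b p).mp hb0
    have : (p : ℤ) ∣ (Int.gcd a b : ℤ) := Int.dvd_coe_gcd hpa hpb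
    rw [hgcd] at this
    have := Int.le_of_dvd (by norm_num) this
    omega
  have hbZ : ((b : ZMod p)) ≠ 0 := by
    intro h0
    have hpb : (p : ℤ) ∣ b := (ZMod.intCast_zmod_eq_zero_iff_dvd b p).mp h0
    have haZ2 : ((a : ZMod p)) ^ 2 = 0 := by rw [← hsum, h0]; ring
    have ha0 : ((a : ZMod p)) = 0 := by
      exact pow_eq_zero_iff (n := 2) (by norm_num) |>.mp haZ2
    have hpa : (p : ℤ) ∣ a := (ZMod.intCast_zmod_eq_zero_iff_dvd a p).mp ha0
    have : (p : ℤ) ∣ (Int.gcd a b : ℤ) := Int.dvd_coe_gcd hpa hpb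
    rw [hgcd] at this
    have := Int.le_of_dvd (by norm_num) this
    omega
  -- (a+b) % 8 = 1
  have habm8 : (a + b) % 8 = 1 := by
    obtain ⟨c₀, hc₀⟩ := ha
    obtain ⟨d₀, hd₀⟩ := hb
    obtain ⟨k, hk⟩ := hdvd
    have h4' : (4 : ℤ) * (c₀ ^ 2 + d₀ ^ 2) = 4 * (8 * k) := by
      rw [hc₀, hd₀] at hk; linear_combination hk
    have hdvd8 : (8 : ℤ) ∣ c₀ ^ 2 + d₀ ^ 2 :=
      ⟨k, mul_left_cancel₀ (by norm_num : (4 : ℤ) ≠ 0) h4'⟩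
    have h8Z : ((c₀ : ZMod 8)) ^ 2 + ((d₀ : ZMod 8)) ^ 2 = 0 := by
      have := (ZMod.intCast_zmod_eq_zero_iff_dvd (c₀ ^ 2 + d₀ ^ 2) 8).mpr hdvd8
      push_cast at this
      linear_combination this
    have dec8 : ∀ x y : ZMod 8, x ^ 2 + y ^ 2 = 0 →
        (ZMod.castHom (by norm_num : (4 : ℕ) ∣ 8) (ZMod 4)) (x + y) = 0 := by decide
    have h' := dec8 _ _ h8Z
    rw [map_add, map_intCast, map_intCast] at h'
    have h4Z : ((c₀ + d₀ : ℤ) : ZMod 4) = 0 := by push_cast; exact h'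
    have : (4 : ℤ) ∣ c₀ + d₀ := (ZMod.intCast_zmod_eq_zero_iff_dvd _ 4).mp h4Z
    obtain ⟨e₀, he₀⟩ := this
    omega
  -- a is a nonzero square mod p
  obtain ⟨hsa, _⟩ := Ecurve.jacHelper p hp4 a b 1 ha (by rw [Int.gcd_comm]; exact hgcd)
    (by have : (p : ℤ) - 1 * b ^ 2 = a ^ 2 := by rw [hab]; ring
        rw [this]; exact dvd_pow_self a (by norm_num))
    (jacobiSym.one_left _)
  -- a + b is a nonzero square mod p
  obtain ⟨hsc, hsc0⟩ := Ecurve.jacHelper p hp4 (a + b) b 2 (Odd.add_even ha hb)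
    (by have h0 : IsCoprime b a := Int.isCoprime_iff_gcd_eq_one.mpr
          (by rw [Int.gcd_comm]; exact hgcd)
        have h1 : IsCoprime b (a + b) := by simpa using h0.add_mul_left_right 1
        exact Int.isCoprime_iff_gcd_eq_one.mp h1)
    (by have : (p : ℤ) - 2 * b ^ 2 = (a + b) * (a - b) := by rw [hab]; ring
        rw [this]; exact dvd_mul_right _ _)
    (by rw [jacobiSym.at_two (Int.natAbs_odd.mpr (Odd.add_even ha hb)),
          ZMod.χ₈_nat_eq_if_mod_eight]
        have h1 : (a + b).natAbs % 8 = 1 ∨ (a + b).natAbs % 8 = 7 := by omega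
        rw [if_neg (by omega), if_pos h1])
  -- square roots
  obtain ⟨r2, hr2⟩ := (ZMod.exists_sq_eq_two_iff hp2).mpr (Or.inl h8)
  have hr20 : r2 ≠ 0 := by intro h0; apply h2ne; rw [hr2, h0, mul_zero]
  obtain ⟨ra, hra⟩ := hsa
  have hra0 : ra ≠ 0 := by intro h0; apply haZ; rw [hra, h0, mul_zero]
  obtain ⟨rc, hrc⟩ := hsc
  have hrc0 : rc ≠ 0 := by intro h0; apply hsc0; rw [hrc, h0, mul_zero]
  push_cast at hrc hsc0
  -- b is a square mod p
  have hsb : IsSquare ((b : ZMod p)) := by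
    refine ⟨((a : ZMod p) + (b : ZMod p)) * (r2 * ra)⁻¹, ?_⟩
    have hinv : (r2 * ra) ≠ 0 := mul_ne_zero hr20 hra0
    field_simp
    linear_combination (-((b : ZMod p) * ra ^ 2)) * hr2 - (2 * (b : ZMod p)) * hra - hsum
  obtain ⟨rb, hrb⟩ := hsb
  have hrb0 : rb ≠ 0 := by intro h0; apply hbZ; rw [hrb, h0, mul_zero]
  -- an element s with s^4 = -1
  obtain ⟨g, hg⟩ := IsCyclic.exists_generator (α := (ZMod p)ˣ)
  have hcard : orderOf g = p - 1 := by
    rw [orderOf_eq_card_of_forall_mem_zpowers hg, Nat.card_eq_fintype_card,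
      ZMod.card_units_eq_totient, Nat.totient_prime hp]
  have h8dvd : 8 ∣ p - 1 := by omega
  have hk8 : 8 * ((p - 1) / 8) = p - 1 := Nat.mul_div_cancel' h8dvd
  have hs'8 : (g ^ ((p - 1) / 8)) ^ 8 = 1 := by
    rw [← pow_mul, show (p - 1) / 8 * 8 = p - 1 by omega, ← hcard]
    exact pow_orderOf_eq_one g
  have hs'4 : (g ^ ((p - 1) / 8)) ^ 4 ≠ 1 := by
    intro h1
    rw [← pow_mul] at h1
    have hdvd' := orderOf_dvd_of_pow_eq_one h1
    rw [hcard] at hdvd'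
    have := Nat.le_of_dvd (by omega) hdvd'
    omega
  set s := ((g ^ ((p - 1) / 8) : (ZMod p)ˣ) : ZMod p) with hsdef
  have hs8 : s ^ 8 = 1 := by rw [hsdef, ← Units.val_pow_eq_pow_val, hs'8, Units.val_one]
  have hs4ne : s ^ 4 ≠ 1 := by
    intro h1
    apply hs'4
    apply Units.ext
    rw [Units.val_pow_eq_pow_val, Units.val_one]
    exact h1
  have hs : s ^ 4 = -1 := by
    have hfac : (s ^ 4 - 1) * (s ^ 4 + 1) = 0 := by linear_combination hs8
    rcases mul_eq_zero.mp hfac with h1 | h1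
    · exact absurd (by linear_combination h1) hs4ne
    · linear_combination h1
  have hs0 : s ≠ 0 := by
    intro h0; apply one_ne_zero (α := ZMod p); linear_combination hs - s ^ 3 * h0
  -- t with t^2 = s^2 + 1
  have hfac2 : (s ^ 2 * (b : ZMod p) - (a : ZMod p)) * (s ^ 2 * (b : ZMod p) + (a : ZMod p)) = 0 := by
    linear_combination ((b : ZMod p)) ^ 2 * hs - hsum
  obtain ⟨t, ht, ht0⟩ : ∃ t : ZMod p, t ^ 2 = s ^ 2 + 1 ∧ t ≠ 0 := by
    have hwne : rc * rb⁻¹ ≠ 0 := mul_ne_zero hrc0 (inv_ne_zero hrb0)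
    rcases mul_eq_zero.mp hfac2 with hcase | hcase
    · refine ⟨rc * rb⁻¹, ?_, hwne⟩
      field_simp
      linear_combination -hrc + (s ^ 2 + 1) * hrb - hcase
    · have hw' : rc ^ 2 = (1 - s ^ 2) * rb ^ 2 := by
        linear_combination -hrc + hcase - (s ^ 2 - 1) * hrb
      refine ⟨r2 * (rc * rb⁻¹)⁻¹, ?_, mul_ne_zero hr20 (inv_ne_zero hwne)⟩
      field_simp
      linear_combination (-(rb ^ 2)) * hr2 - (1 + s ^ 2) * hw' + rb ^ 2 * hs
  -- u with u^2 = s^2 - 1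
  have hv : (r2 * s ^ 2) ^ 2 = -2 := by linear_combination (-(s ^ 4)) * hr2 + 2 * hs
  have hu : (r2 * s ^ 2 * t⁻¹) ^ 2 = s ^ 2 - 1 := by
    field_simp
    linear_combination (-(s ^ 4)) * hr2 - (s ^ 2 - 1) * ht + hs
  set u := r2 * s ^ 2 * t⁻¹ with hudef
  clear_value u
  clear hudef hv
  -- the point of order 8
  have hW1 : (Ecurve p).a₁ = 0 := rfl
  have hW2 : (Ecurve p).a₂ = 0 := rfl
  have hW3 : (Ecurve p).a₃ = 0 := rfl
  have hW4 : (Ecurve p).a₄ = -1 := rfl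
  have hW6 : (Ecurve p).a₆ = 0 := rfl
  have hEq : (Ecurve p).Equation (s^2 + s*u + s*t + u*t) ((s+t)*(s+u)*(t+u)) := by
    rw [Affine.equation_iff, hW1, hW2, hW3, hW4, hW6]
    linear_combination ((1)*u^2 + (1)*u^4 + (1)*t^1*u^3 + (1)*t^2*u^2 + (2)*s^1*u^1 + (3)*s^1*u^3 + (3)*s^1*t^1*u^2 + (2)*s^1*t^2*u^1 + (1)*s^2 + (2)*s^2*u^2 + (3)*s^2*t^1*u^1 + (1)*s^2*t^2 + (-1)*s^3*u^1 + (1)*s^3*t^1 + (-1)*s^4) * ht + ((1)*u^2 + (1)*t^1*u^1 + (3)*s^1*u^1 + (1)*s^1*t^1 + (2)*s^1*t^1*u^2 + (2)*s^2 + (2)*s^2*u^2 + (4)*s^2*t^1*u^1 + (4)*s^3*u^1 + (2)*s^3*t^1 + (2)*s^4) * hu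
  have hΔ : (Ecurve p).Δ ≠ 0 := by
    have h64 : (Ecurve p).Δ = 64 := by
      simp [Ecurve, WeierstrassCurve.Δ, WeierstrassCurve.b₂, WeierstrassCurve.b₄,
        WeierstrassCurve.b₆, WeierstrassCurve.b₈]
      norm_num
    rw [h64, show (64 : ZMod p) = 2 ^ 6 by norm_num]
    exact pow_ne_zero _ h2ne
  have hNS := ((Ecurve p).equation_iff_nonsingular_of_Δ_ne_zero hΔ).mp hEq
  have hy0 : (s+t)*(s+u)*(t+u) ≠ 0 := by
    refine mul_ne_zero (mul_ne_zero ?_ ?_) ?_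
    · intro h0; apply one_ne_zero (α := ZMod p); linear_combination -ht + (t-s)*h0
    · intro h0; apply one_ne_zero (α := ZMod p); linear_combination hu + (s-u)*h0
    · intro h0; apply h2ne; linear_combination -ht + hu + (t-u)*h0
  have hkey1 : (3*(s^2 + s*u + s*t + u*t)^2 - 1)^2
      = (s^2 + 2*(s^2 + s*u + s*t + u*t)) * (2*((s+t)*(s+u)*(t+u)))^2 := by
    linear_combination ((-6)*u^2 + (-7)*u^4 + (-8)*t^1*u^3 + (-8)*t^1*u^5 + (-7)*t^2*u^4 + (-8)*t^3*u^3 + (-12)*s^1*u^1 + (-36)*s^1*u^3 + (-24)*s^1*u^5 + (-24)*s^1*t^1*u^2 + (-36)*s^1*t^1*u^4 + (-36)*s^1*t^2*u^3 + (-24)*s^1*t^3*u^2 + (-6)*s^2 + (-70)*s^2*u^2 + (-77)*s^2*u^4 + (-24)*s^2*t^1*u^1 + (-64)*s^2*t^1*u^3 + (-70)*s^2*t^2*u^2 + (-24)*s^2*t^3*u^1 + (-60)*s^3*u^1 + (-68)*s^3*u^3 + (-8)*s^3*t^1 + (-56)*s^3*t^1*u^2 + (-60)*s^3*t^2*u^1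 + (-8)*s^3*t^3 + (-19)*s^4 + (22)*s^4*u^2 + (-24)*s^4*t^1*u^1 + (-19)*s^4*t^2 + (60)*s^5*u^1 + (-4)*s^5*t^1 + (23)*s^6) * ht + ((1)*1 + (-7)*u^2 + (-8)*t^1*u^3 + (-12)*s^1*u^1 + (-24)*s^1*u^3 + (-36)*s^1*t^1*u^2 + (-5)*s^2 + (-84)*s^2*u^2 + (-48)*s^2*t^1*u^1 + (-32)*s^2*t^1*u^3 + (-96)*s^3*u^1 + (-32)*s^3*u^3 + (-20)*s^3*t^1 + (-96)*s^3*t^1*u^2 + (-36)*s^4 + (-96)*s^4*u^2 + (-96)*s^4*t^1*u^1 + (-96)*s^5*u^1 + (-32)*s^5*t^1 + (-32)*s^6) * hu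
  obtain ⟨x₂, y₂, h₂, hadd1, hx₂, heq₂⟩ :=
    Ecurve.dbl hW1 hW2 hW3 hW4 hW6 hNS hy0 h2ne hkey1
  subst hx₂
  have hy₂0 : y₂ ≠ 0 := by
    intro h0
    rw [h0] at heq₂
    have h2s2 : (2 : ZMod p) * s ^ 2 = 0 := by linear_combination heq₂ + s ^ 2 * hs
    rcases mul_eq_zero.mp h2s2 with hc | hc
    · exact h2ne hc
    · exact hs0 (pow_eq_zero_iff (n := 2) (by norm_num) |>.mp hc)
  have hkey2 : (3*(s^2)^2 - 1)^2 = ((0 : ZMod p) + 2*(s^2)) * (2*y₂)^2 := by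
    linear_combination (s ^ 4 + 1) * hs - 8 * s ^ 2 * heq₂
  obtain ⟨x₃, y₃, h₃, hadd2, hx₃, heq₃⟩ :=
    Ecurve.dbl hW1 hW2 hW3 hW4 hW6 h₂ hy₂0 h2ne hkey2
  subst hx₃
  have hy₃0 : y₃ = 0 := by
    have h0 : y₃ ^ 2 = 0 := by linear_combination heq₃
    exact pow_eq_zero_iff (n := 2) (by norm_num) |>.mp h0
  have hadd3 : Affine.Point.some _ _ h₃ + Affine.Point.some _ _ h₃ = 0 := by
    apply Affine.Point.add_self_of_Y_eq
    rw [Affine.negY, hW1, hW3, hy₃0]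
    ring
  refine ⟨Affine.Point.some _ _ hNS, ?_⟩
  haveI : Fact (Nat.Prime 2) := ⟨Nat.prime_two⟩
  have h4P : (4 : ℕ) • Affine.Point.some _ _ hNS = Affine.Point.some _ _ h₃ := by
    rw [show (4 : ℕ) = 2 * 2 from rfl, mul_smul, two_nsmul (Affine.Point.some _ _ hNS), hadd1, two_nsmul, hadd2]
  have h8P : (8 : ℕ) • Affine.Point.some _ _ hNS = 0 := by
    rw [show (8 : ℕ) = 2 * 4 from rfl, mul_smul, h4P, two_nsmul, hadd3]
  have hord := addOrderOf_eq_prime_pow (p := 2) (n := 2) (x := Affine.Point.some _ _ hNS)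
    (by rw [show (2 : ℕ) ^ 2 = 4 from rfl, h4P]; exact Affine.Point.some_ne_zero h₃)
    (by rw [show (2 : ℕ) ^ 3 = 8 from rfl]; exact h8P)
  rw [hord]; norm_num
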